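/- Let F₁, ..., F_k be finitely many subspaces of a finite-dimensional vector space E over a field of characteristic zero. For every m ≥ 0, Sym^m(⋂ⱼ Fⱼ) = ⋂ⱼ Sym^m(Fⱼ) as subspaces of Sym^m(E). -/

import Mathlib

/-- The `m`-th symmetric power of a subspace `F` of `E`, viewed (in characteristic zero,
via polarization) as the subspace of the `m`-th tensor power of `E` spanned by the tensors
`v ⊗ v ⊗ ... ⊗ v` for `v ∈ F`. -/
noncomputable def symPow (K : Type*) [Field K] {E : Type*} [AddCommGroup E] [Module K E]
    (m : ℕ) (F : Submodule K E) : Submodule K (PiTensorProduct K (fun _ : Fin m => E)) :=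
  Submodule.span K {x | ∃ v ∈ F, x = PiTensorProduct.tprod K (fun _ : Fin m => v)}

section aux
open PiTensorProduct
variable {K : Type*} [Field K] {E : Type*} [AddCommGroup E] [Module K E] {m : ℕ}

/-- Span of pure tensors with `i`-th factor in `S i`. -/
noncomputable def TTaux (S : Fin m → Submodule K E) :
    Submodule K (PiTensorProduct K (fun _ : Fin m => E)) :=
  Submodule.span K {x | ∃ f : Fin m → E, (∀ i, f i ∈ S i) ∧ x = tprod K f}

theorem TTaux_map_mem (S S' : Fin m → Submodule K E) (φ : Fin m → E →ₗ[K] E)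
    (h : ∀ i, ∀ v ∈ S i, φ i v ∈ S' i) {x} (hx : x ∈ TTaux S) :
    PiTensorProduct.map φ x ∈ TTaux S' := by
  have : Submodule.map (PiTensorProduct.map φ)
      (TTaux S) ≤ TTaux S' := by
    rw [TTaux, Submodule.map_span_le]
    rintro _ ⟨f, hf, rfl⟩
    rw [PiTensorProduct.map_tprod]
    exact Submodule.subset_span ⟨_, fun i => h i _ (hf i), rfl⟩
  exact this ⟨x, hx, rfl⟩

theorem TTaux_map_fix (S : Fin m → Submodule K E) (φ : Fin m → E →ₗ[K] E)
    (h : ∀ i, ∀ v ∈ S i, φ i v = v) {x} (hx : x ∈ TTaux S) :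
    PiTensorProduct.map φ x = x := by
  induction hx using Submodule.span_induction with
  | mem x hx =>
    obtain ⟨f, hf, rfl⟩ := hx
    rw [PiTensorProduct.map_tprod]
    congr 1
    exact funext fun i => h i _ (hf i)
  | zero => simp
  | add x y _ _ hx hy => simp [hx, hy]
  | smul a x _ hx => simp [hx]

theorem symPow_le_TTaux (F : Submodule K E) :
    symPow K m F ≤ TTaux (fun _ => F) := by
  rw [symPow, Submodule.span_le]
  rintro _ ⟨v, hv, rfl⟩
  exact Submodule.subset_span ⟨_, fun _ => hv, rfl⟩

end aux

section comb
open Finset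

theorem negOnePowSub {K : Type*} [Field K] {s m : ℕ} (h : s ≤ m) :
    (-1 : K) ^ (m - s) = (-1) ^ m * (-1) ^ s := by
  have : (-1 : K) ^ (m - s) * ((-1) ^ s * (-1) ^ s) = (-1) ^ m * (-1) ^ s := by
    rw [← mul_assoc, ← pow_add, Nat.sub_add_cancel h]
  simpa [← pow_add, ← two_mul, pow_mul] using this

theorem sumPowK {K : Type*} [Field K] {α : Type*} [DecidableEq α] (P : Finset α) :
    ∑ T ∈ P.powerset, (-1 : K) ^ T.card = if P = ∅ then 1 else 0 := by
  have h := Finset.sum_powerset_neg_one_pow_card (x := P)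
  have : ((∑ T ∈ P.powerset, (-1 : ℤ) ^ T.card : ℤ) : K)
      = ∑ T ∈ P.powerset, (-1 : K) ^ T.card := by push_cast; rfl
  rw [← this, h]
  split <;> simp

theorem coeffSum {K : Type*} [Field K] {m : ℕ} (r : Fin m → Fin m) :
    ∑ S : Finset (Fin m), (if ∀ i, r i ∈ S then (-1 : K) ^ (m - S.card) else 0)
      = if Function.Bijective r then 1 else 0 := by
  classical
  set R : Finset (Fin m) := Finset.image r Finset.univ with hR
  have hcond : ∀ S : Finset (Fin m), (∀ i, r i ∈ S) ↔ R ⊆ S := by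
    intro S
    constructor
    · intro h x hx
      obtain ⟨i, _, rfl⟩ := Finset.mem_image.1 hx
      exact h i
    · intro h i
      exact h (Finset.mem_image.2 ⟨i, Finset.mem_univ i, rfl⟩)
  have step1 : ∑ S : Finset (Fin m), (if ∀ i, r i ∈ S then (-1 : K) ^ (m - S.card) else 0)
      = ∑ S ∈ Finset.univ.filter (fun S => R ⊆ S), (-1 : K) ^ (m - S.card) := by
    rw [Finset.sum_filter]
    exact Finset.sum_congr rfl fun S _ => by
      by_cases h : R ⊆ S
      · rw [if_pos ((hcond S).2 h), if_pos h]
      · rw [if_neg (fun h' => h ((hcond S).1 h')), if_neg h]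
  have step2 : ∑ S ∈ Finset.univ.filter (fun S => R ⊆ S), (-1 : K) ^ (m - S.card)
      = ∑ T ∈ Rᶜ.powerset, (-1 : K) ^ (m - (R.card + T.card)) := by
    refine Finset.sum_nbij' (fun S => S \ R) (fun T => R ∪ T) ?_ ?_ ?_ ?_ ?_
    · intro S hS
      simp only [Finset.mem_filter] at hS
      exact Finset.mem_powerset.2 (by
        intro x hx
        simp only [Finset.mem_sdiff] at hx
        simpa [Finset.mem_compl] using hx.2)
    · intro T hT
      simp only [Finset.mem_powerset] at hT
      simp
    · intro S hS
      simp only [Finset.mem_filter] at hS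
      exact Finset.union_sdiff_of_subset hS.2
    · intro T hT
      simp only [Finset.mem_powerset] at hT
      rw [Finset.union_sdiff_cancel_left]
      exact Finset.disjoint_left.2 fun x hx hx2 => by
        have := hT hx2; simp only [Finset.mem_compl] at this; exact this hx
    · intro S hS
      simp only [Finset.mem_filter] at hS
      congr 2
      rw [← Finset.card_sdiff_add_card_eq_card hS.2]
      ring
  have hcardRc : Rᶜ.card = m - R.card := by
    have := Finset.card_compl R
    simpa using this
  have step3 : ∑ T ∈ Rᶜ.powerset, (-1 : K) ^ (m - (R.card + T.card))
      = (-1 : K) ^ m * (-1) ^ R.card * (if Rᶜ = ∅ then (1 : K) else 0) := by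
    rw [← sumPowK (K := K) Rᶜ, Finset.mul_sum]
    refine Finset.sum_congr rfl fun T hT => ?_
    have hT' : T ⊆ Rᶜ := Finset.mem_powerset.1 hT
    have h1 : R.card + T.card ≤ m := by
      have h2 := Finset.card_le_card hT'
      have h3 : R.card ≤ m := by simpa using Finset.card_le_univ R
      rw [hcardRc] at h2
      omega
    rw [negOnePowSub h1, pow_add]
    ring
  rw [step1, step2, step3]
  have hbij : Function.Bijective r ↔ Rᶜ = ∅ := by
    rw [Finset.eq_empty_iff_forall_notMem]
    constructor
    · intro h x hx
      obtain ⟨i, rfl⟩ := h.2 x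
      simp [hR] at hx
    · intro h
      rw [Fintype.bijective_iff_surjective_and_card]
      refine ⟨fun x => ?_, rfl⟩
      have := h x
      simp only [Finset.mem_compl, not_not, hR, Finset.mem_image] at this
      obtain ⟨i, _, rfl⟩ := this
      exact ⟨i, rfl⟩
  by_cases hb : Function.Bijective r
  · have hRc : Rᶜ = ∅ := hbij.1 hb
    have hRu : R = Finset.univ := by
      simpa [Finset.compl_eq_empty_iff] using hRc
    rw [if_pos hRc, if_pos hb, hRu]
    simp [Finset.card_univ, ← pow_add, ← two_mul, pow_mul]
  · rw [if_neg (fun h => hb (hbij.2 h)), if_neg hb]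
    ring
end comb
section polar
variable {K : Type*} [Field K] {E : Type*} [AddCommGroup E] [Module K E] {m : ℕ}

theorem polarIdentity (f : Fin m → E) :
    ∑ S : Finset (Fin m), (-1 : K) ^ (m - S.card) •
        PiTensorProduct.tprod K (fun _ : Fin m => ∑ i ∈ S, f i)
      = ∑ σ : Equiv.Perm (Fin m), PiTensorProduct.tprod K (fun i => f (σ i)) := by
  classical
  have e1 : ∀ S : Finset (Fin m), PiTensorProduct.tprod K (fun _ : Fin m => ∑ i ∈ S, f i)
      = ∑ r ∈ Fintype.piFinset (fun _ : Fin m => S), PiTensorProduct.tprod K (fun i => f (r i)) :=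
    fun S => MultilinearMap.map_sum_finset (PiTensorProduct.tprod K) (fun _ j => f j) (fun _ => S)
  calc
    ∑ S : Finset (Fin m), (-1 : K) ^ (m - S.card) •
        PiTensorProduct.tprod K (fun _ : Fin m => ∑ i ∈ S, f i)
      = ∑ S : Finset (Fin m), ∑ r : Fin m → Fin m,
          (if ∀ i, r i ∈ S then (-1 : K) ^ (m - S.card) • PiTensorProduct.tprod K (fun i => f (r i))
            else 0) := by
        refine Finset.sum_congr rfl fun S _ => ?_
        rw [e1 S, Finset.smul_sum]
        rw [← Finset.sum_filter]
        refine Finset.sum_congr ?_ fun r _ => rfl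
        ext r
        simp [Fintype.mem_piFinset]
    _ = ∑ r : Fin m → Fin m, ∑ S : Finset (Fin m),
          (if ∀ i, r i ∈ S then (-1 : K) ^ (m - S.card) • PiTensorProduct.tprod K (fun i => f (r i))
            else 0) := Finset.sum_comm
    _ = ∑ r : Fin m → Fin m,
          (if Function.Bijective r then (1 : K) else 0) • PiTensorProduct.tprod K (fun i => f (r i)) := by
        refine Finset.sum_congr rfl fun r _ => ?_
        rw [← coeffSum (K := K) r, Finset.sum_smul]
        refine Finset.sum_congr rfl fun S _ => ?_
        split <;> simp
    _ = ∑ r ∈ Finset.univ.filter (fun r : Fin m → Fin m => Function.Bijective r),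
          PiTensorProduct.tprod K (fun i => f (r i)) := by
        rw [Finset.sum_filter]
        refine Finset.sum_congr rfl fun r _ => ?_
        split <;> simp
    _ = ∑ σ : Equiv.Perm (Fin m), PiTensorProduct.tprod K (fun i => f (σ i)) := by
        refine (Finset.sum_bij (fun (σ : Equiv.Perm (Fin m)) _ => (⇑σ : Fin m → Fin m))
          ?_ ?_ ?_ ?_).symm
        · intro σ _
          exact Finset.mem_filter.2 ⟨Finset.mem_univ _, σ.bijective⟩
        · intro σ _ τ _ h
          exact Equiv.coe_fn_injective h
        · intro r hr
          simp only [Finset.mem_filter] at hr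
          exact ⟨Equiv.ofBijective r hr.2, Finset.mem_univ _, rfl⟩
        · intro σ _
          rfl
end polar
section symop
variable (K : Type*) [Field K] (E : Type*) [AddCommGroup E] [Module K E] (m : ℕ)

noncomputable def symOp : (PiTensorProduct K (fun _ : Fin m => E)) →ₗ[K]
    (PiTensorProduct K (fun _ : Fin m => E)) :=
  ∑ σ : Equiv.Perm (Fin m), (PiTensorProduct.reindex K (fun _ : Fin m => E) σ).toLinearMap

variable {K E m}

theorem symOp_tprod (f : Fin m → E) :
    symOp K E m (PiTensorProduct.tprod K f)
      = ∑ σ : Equiv.Perm (Fin m), PiTensorProduct.tprod K (fun i => f (σ i)) := by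
  rw [symOp, LinearMap.sum_apply]
  refine Fintype.sum_equiv (Equiv.inv (Equiv.Perm (Fin m))) _ _ fun σ => ?_
  simp [PiTensorProduct.reindex_tprod, Equiv.Perm.inv_def]

theorem symOp_of_symPow (F : Submodule K E) {x} (hx : x ∈ symPow K m F) :
    symOp K E m x = ((Nat.factorial m : ℕ) : K) • x := by
  induction hx using Submodule.span_induction with
  | mem x hx =>
    obtain ⟨v, hv, rfl⟩ := hx
    rw [symOp_tprod]
    rw [Finset.sum_const, Finset.card_univ, Fintype.card_perm, Fintype.card_fin,
      Nat.cast_smul_eq_nsmul]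
  | zero => simp
  | add x y _ _ hx hy => simp [hx, hy]
  | smul a x _ hx => rw [map_smul, hx, smul_comm]

theorem symOp_mem_symPow (W : Submodule K E) {x} (hx : x ∈ TTaux (fun _ : Fin m => W)) :
    symOp K E m x ∈ symPow K m W := by
  induction hx using Submodule.span_induction with
  | mem x hx =>
    obtain ⟨f, hf, rfl⟩ := hx
    rw [symOp_tprod, ← polarIdentity]
    refine Submodule.sum_mem _ fun S _ => Submodule.smul_mem _ _ ?_
    exact Submodule.subset_span ⟨∑ i ∈ S, f i, Submodule.sum_mem _ fun i _ => hf i, rfl⟩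
  | zero => simp
  | add x y _ _ hx hy => rw [map_add]; exact Submodule.add_mem _ hx hy
  | smul a x _ hx => rw [map_smul]; exact Submodule.smul_mem _ _ hx
end symop

section main
variable {K : Type*} [Field K] {E : Type*} [AddCommGroup E] [Module K E] {m : ℕ}

theorem exists_retraction (F G : Submodule K E) :
    ∃ r : E →ₗ[K] E, (∀ v ∈ G, r v = v) ∧ (∀ v ∈ F, r v ∈ F ⊓ G) := by
  classical
  set W : Submodule K E := F ⊓ G with hW
  set W' : Submodule K F := W.comap F.subtype with hW'
  obtain ⟨q, hq⟩ := W'.exists_isCompl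
  set F' : Submodule K E := q.map F.subtype with hF'
  have hF'F : F' ≤ F := Submodule.map_subtype_le _ _
  have hWF : W ≤ F := inf_le_left
  have hWG : W ≤ G := inf_le_right
  have hmapW' : W'.map F.subtype = W := by
    rw [hW', Submodule.map_comap_subtype]
    exact inf_eq_right.2 hWF
  have hsup : W ⊔ F' = F := by
    rw [← hmapW', hF', ← Submodule.map_sup, hq.codisjoint.eq_top, Submodule.map_top,
      Submodule.range_subtype]
  have hdisjGF' : ∀ x, x ∈ G → x ∈ F' → x = 0 := by
    intro x hxG hxF'
    obtain ⟨y, hyq, rfl⟩ := hxF'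
    have hyW' : y ∈ W' := by
      simp only [hW', Submodule.mem_comap]
      exact ⟨y.2, hxG⟩
    have : y ∈ W' ⊓ q := ⟨hyW', hyq⟩
    rw [hq.disjoint.eq_bot, Submodule.mem_bot] at this
    simp [this]
  obtain ⟨D, hD⟩ := (G ⊔ F').exists_isCompl
  have hGC : IsCompl G (F' ⊔ D) := by
    constructor
    · rw [disjoint_iff_inf_le]
      intro x ⟨hxG, hxC⟩
      obtain ⟨a, ha, d, hd, rfl⟩ := Submodule.mem_sup.1 hxC
      have hdmem : d ∈ (G ⊔ F') ⊓ D := by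
        refine ⟨?_, hd⟩
        have : d = (a + d) - a := by abel
        rw [this]
        exact Submodule.sub_mem _ (Submodule.mem_sup_left hxG) (Submodule.mem_sup_right ha)
      rw [hD.disjoint.eq_bot] at hdmem
      simp only [Submodule.mem_bot] at hdmem
      subst hdmem
      rw [add_zero] at hxG ⊢
      simp [hdisjGF' a hxG ha]
    · rw [codisjoint_iff, ← sup_assoc, hD.codisjoint.eq_top]
  set p := G.projectionOnto (F' ⊔ D) hGC with hp
  refine ⟨G.subtype ∘ₗ p, fun v hv => ?_, fun v hv => ?_⟩
  · simp only [LinearMap.comp_apply, hp]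
    have h1 := Submodule.projectionOnto_apply_left hGC ⟨v, hv⟩
    exact congrArg G.subtype h1
  · rw [← hsup] at hv
    obtain ⟨w, hw, f', hf', rfl⟩ := Submodule.mem_sup.1 hv
    simp only [LinearMap.comp_apply, map_add, hp]
    have h1 := Submodule.projectionOnto_apply_left hGC ⟨w, hWG hw⟩
    have h2 := Submodule.projectionOnto_apply_of_mem_right hGC (Submodule.mem_sup_left hf')
    have h1' := congrArg G.subtype h1
    simp only at h1'
    rw [h2]
    simp only [map_zero, add_zero]
    rw [show (G.projectionOnto (F' ⊔ D) hGC) w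
        = (G.projectionOnto (F' ⊔ D) hGC) ((⟨w, hWG hw⟩ : G) : E) from rfl,
      Submodule.projectionOnto_apply_left hGC]
    simpa using hw
end main

section pair
variable {K : Type*} [Field K] [CharZero K] {E : Type*} [AddCommGroup E] [Module K E] {m : ℕ}

omit [CharZero K] in
theorem symPow_mono {F G : Submodule K E} (h : F ≤ G) : symPow K m F ≤ symPow K m G :=
  Submodule.span_mono (by rintro _ ⟨v, hv, rfl⟩; exact ⟨v, h hv, rfl⟩)

theorem symPow_inf (F G : Submodule K E) :
    symPow K m (F ⊓ G) = symPow K m F ⊓ symPow K m G := by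
  refine le_antisymm (le_inf (symPow_mono inf_le_left) (symPow_mono inf_le_right)) ?_
  intro x hx
  obtain ⟨hxF, hxG⟩ := Submodule.mem_inf.1 hx
  obtain ⟨r, hrG, hrF⟩ := exists_retraction F G
  have hxG' : x ∈ TTaux (fun _ : Fin m => G) := symPow_le_TTaux G hxG
  have chain : ∀ j : ℕ,
      x ∈ TTaux (fun i : Fin m => if (i : ℕ) < j then F ⊓ G else F) := by
    intro j
    induction j with
    | zero => simpa using symPow_le_TTaux F hxF
    | succ j ih =>
      have hfix : PiTensorProduct.map
          (fun i : Fin m => if (i : ℕ) = j then r else LinearMap.id) x = x := by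
        refine TTaux_map_fix (fun _ => G) _ (fun i v hv => ?_) hxG'
        by_cases h : (i : ℕ) = j
        · rw [if_pos h]; exact hrG v hv
        · rw [if_neg h]; rfl
      rw [← hfix]
      refine TTaux_map_mem _ _ _ (fun i v hv => ?_) ih
      by_cases h : (i : ℕ) = j
      · rw [if_pos h, if_pos (by omega : (i : ℕ) < j + 1)]
        rw [if_neg (by omega : ¬ (i : ℕ) < j)] at hv
        exact hrF v hv
      · rw [if_neg h]
        by_cases h2 : (i : ℕ) < j
        · rw [if_pos h2] at hv
          rw [if_pos (by omega : (i : ℕ) < j + 1)]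
          exact hv
        · rw [if_neg h2] at hv
          rw [if_neg (by omega : ¬ (i : ℕ) < j + 1)]
          exact hv
  have hxW : x ∈ TTaux (fun _ : Fin m => F ⊓ G) := by
    have h := chain m
    have he : (fun i : Fin m => if (i : ℕ) < m then F ⊓ G else F)
        = fun _ : Fin m => F ⊓ G := funext fun i => if_pos i.isLt
    rwa [he] at h
  have h1 : symOp K E m x ∈ symPow K m (F ⊓ G) := symOp_mem_symPow _ hxW
  have h2 : symOp K E m x = ((Nat.factorial m : ℕ) : K) • x := symOp_of_symPow F hxF
  rw [h2] at h1
  have hne : ((Nat.factorial m : ℕ) : K) ≠ 0 :=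
    Nat.cast_ne_zero.2 (Nat.factorial_ne_zero m)
  exact (Submodule.smul_mem_iff _ hne).1 h1
end pair

theorem iInfSplit {α : Type*} [CompleteLattice α] {n : ℕ} (g : Fin (n + 1 + 1) → α) :
    (⨅ j, g j) = g 0 ⊓ ⨅ i : Fin (n + 1), g i.succ := by
  refine le_antisymm (le_inf (iInf_le _ 0) (le_iInf fun i => iInf_le _ i.succ))
    (le_iInf fun j => ?_)
  exact Fin.cases inf_le_left
    (fun i => le_trans inf_le_right (iInf_le (fun i : Fin (n + 1) => g i.succ) i)) j

/-- Let `F₁, ..., F_k` be finitely many (`k ≥ 1`) subspaces of a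
finite-dimensional vector space `E` over a field of characteristic zero. For every
`m ≥ 0`, `Sym^m(⋂ⱼ Fⱼ) = ⋂ⱼ Sym^m(Fⱼ)` as subspaces of `Sym^m(E)`. -/
theorem stmt5 {K E : Type*} [Field K] [CharZero K] [AddCommGroup E] [Module K E]
    [FiniteDimensional K E] (k : ℕ) (hk : 0 < k) (F : Fin k → Submodule K E) (m : ℕ) :
    symPow K m (⨅ j, F j) = ⨅ j, symPow K m (F j) := by
  obtain ⟨n, rfl⟩ : ∃ n, k = n + 1 := ⟨k - 1, by omega⟩
  clear hk
  induction n with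
  | zero =>
    have e1 : (⨅ j : Fin 1, F j) = F 0 :=
      le_antisymm (iInf_le _ 0) (le_iInf fun j => by rw [Subsingleton.elim j 0])
    have e2 : (⨅ j : Fin 1, symPow K m (F j)) = symPow K m (F 0) :=
      le_antisymm (iInf_le _ 0) (le_iInf fun j => by rw [Subsingleton.elim j 0])
    rw [e1, e2]
  | succ n ih =>
    rw [iInfSplit F, iInfSplit (fun j => symPow K m (F j)), symPow_inf,
      ih (fun i => F i.succ)]
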